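/- If D is an adequate link diagram with n crossings, then the breadth of its Kauffman bracket equals 2n + 2|s_+D| + 2|s_-D| - 4. -/

import Mathlib

open LaurentPolynomial

namespace KnotPaper

/-- A combinatorial model of a link diagram: a set `V` of crossings, each with four
edge-ends (labelled `0,1,2,3` counterclockwise), together with a fixed-point-free
involution `arcs` on edge-ends describing the arcs/strands connecting the crossings. -/
structure Diagram (V : Type) where
  arcs : V × Fin 4 → V × Fin 4
  arcs_invol : Function.Involutive arcs
  arcs_ne : ∀ x, arcs x ≠ x

/-- A state assigns `true` (positive split) or `false` (negative split) to each crossing. -/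
abbrev DState (V : Type) := V → Bool

/-- The pairing of the four edge-ends of a crossing induced by splitting it:
positively (`0-1`, `2-3`) or negatively (`0-3`, `1-2`). -/
def resolveEnd {V : Type} (s : DState V) (x : V × Fin 4) : V × Fin 4 :=
  (x.1,
    if s x.1 then
      (if x.2 = 0 then 1 else if x.2 = 1 then 0 else if x.2 = 2 then 3 else 2)
    else
      (if x.2 = 0 then 3 else if x.2 = 3 then 0 else if x.2 = 1 then 2 else 1))

/-- Two edge-ends are related if joined by an arc of the diagram or by the splitting. -/
def circuitRel {V : Type} (D : Diagram V) (s : DState V) (x y : V × Fin 4) : Prop :=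
  D.arcs x = y ∨ resolveEnd s x = y

/-- `circuits D s` is the number of circuits `|sD|` of the state `s`: the number of
connected components of the splitted diagram. -/
noncomputable def circuits {V : Type} (D : Diagram V) (s : DState V) : ℕ :=
  Nat.card (Quotient (Relation.EqvGen.setoid (circuitRel D s)))

/-- The all-positive state `s₊`. -/
def sPlus (V : Type) : DState V := fun _ => true

/-- The all-negative state `s₋`. -/
def sMinus (V : Type) : DState V := fun _ => false

/-- `∑ i, s(i)` where positive splits count `+1` and negative splits `-1`. -/
def signSum {V : Type} [Fintype V] (s : DState V) : ℤ :=
  ∑ c : V, (if s c then (1 : ℤ) else -1)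

/-- The Kauffman bracket `⟨D⟩ = ∑ₛ A^{∑ᵢ s(i)} (-A⁻² - A²)^{|sD| - 1}`. -/
noncomputable def kauffman {V : Type} [Fintype V] [DecidableEq V] (D : Diagram V) :
    LaurentPolynomial ℤ :=
  ∑ s : DState V, T (signSum s) * (-T (-2) - T 2) ^ (circuits D s - 1)

/-- `s` and `s'` differ at exactly one crossing. -/
def OneOff {V : Type} (s s' : DState V) : Prop :=
  ∃ i, s i ≠ s' i ∧ ∀ j, j ≠ i → s j = s' j

/-- `D` is plus-adequate: `|s₊D| > |sD|` for every state `s` with exactly one negative split. -/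
def PlusAdequate {V : Type} (D : Diagram V) : Prop :=
  ∀ s : DState V, OneOff (sPlus V) s → circuits D s < circuits D (sPlus V)

/-- `D` is minus-adequate: `|s₋D| > |sD|` for every state `s` with exactly one positive split. -/
def MinusAdequate {V : Type} (D : Diagram V) : Prop :=
  ∀ s : DState V, OneOff (sMinus V) s → circuits D s < circuits D (sMinus V)

/-- `D` is adequate if it is both plus- and minus-adequate. -/
def Adequate {V : Type} (D : Diagram V) : Prop := PlusAdequate D ∧ MinusAdequate D

/-- The maximal exponent `M_p` of a (nonzero) Laurent polynomial (junk value `0` for `p = 0`). -/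
noncomputable def maxDeg (p : LaurentPolynomial ℤ) : ℤ := WithBot.unbotD 0 p.coeff.support.max

/-- The minimal exponent `m_p` of a (nonzero) Laurent polynomial (junk value `0` for `p = 0`). -/
noncomputable def minDeg (p : LaurentPolynomial ℤ) : ℤ := WithTop.untopD 0 p.coeff.support.min

/-- The breadth `B(p) = M_p - m_p` of a Laurent polynomial. -/
noncomputable def breadth (p : LaurentPolynomial ℤ) : ℤ := maxDeg p - minDeg p

end KnotPaper

namespace KnotPaper


-- ## Auxiliary lemmas

lemma mulT_apply (f : LaurentPolynomial ℤ) (n k : ℤ) :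
    (f * T n : LaurentPolynomial ℤ).coeff k = f.coeff (k - n) := by
  rw [show (T n : LaurentPolynomial ℤ) = AddMonoidAlgebra.single n 1 from rfl,
    AddMonoidAlgebra.coeff_mul_single_apply, mul_one]
  congr 1

lemma Tmul_apply (f : LaurentPolynomial ℤ) (n k : ℤ) :
    (T n * f : LaurentPolynomial ℤ).coeff k = f.coeff (k - n) := by
  rw [show (T n : LaurentPolynomial ℤ) = AddMonoidAlgebra.single n 1 from rfl,
    AddMonoidAlgebra.coeff_single_mul_apply, one_mul]
  congr 1; ring

lemma one_apply (k : ℤ) : (1 : LaurentPolynomial ℤ).coeff k = if k = 0 then 1 else 0 := by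
  rw [← LaurentPolynomial.T_zero, LaurentPolynomial.T_apply]
  simp [eq_comm]

noncomputable def P : LaurentPolynomial ℤ := -T (-2) - T 2

lemma mulP_apply (f : LaurentPolynomial ℤ) (k : ℤ) :
    (f * P : LaurentPolynomial ℤ).coeff k = -(f.coeff (k + 2)) - f.coeff (k - 2) := by
  have : (f * P : LaurentPolynomial ℤ) = -(f * T (-2)) - f * T 2 := by
    rw [P]; ring
  rw [this]
  show (-(f * T (-2)) : LaurentPolynomial ℤ).coeff k - (f * T 2 : LaurentPolynomial ℤ).coeff k
      = -(f.coeff (k + 2)) - f.coeff (k - 2)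
  rw [show (-(f * T (-2)) : LaurentPolynomial ℤ).coeff k = -((f * T (-2) : LaurentPolynomial ℤ).coeff k) from rfl,
    mulT_apply, mulT_apply]
  norm_num

lemma P_pow_apply_hi (m : ℕ) (k : ℤ) (hk : 2 * (m : ℤ) < k) : (P ^ m : LaurentPolynomial ℤ).coeff k = 0 := by
  induction m generalizing k with
  | zero => rw [pow_zero, one_apply, if_neg (by simpa using (by omega : k ≠ 0))]
  | succ n ih =>
    rw [pow_succ, mulP_apply, ih, ih] <;> push_cast at hk ⊢ <;> omega

lemma P_pow_apply_lo (m : ℕ) (k : ℤ) (hk : k < -(2 * (m : ℤ))) : (P ^ m : LaurentPolynomial ℤ).coeff k = 0 := by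
  induction m generalizing k with
  | zero => rw [pow_zero, one_apply, if_neg (by simpa using (by omega : k ≠ 0))]
  | succ n ih =>
    rw [pow_succ, mulP_apply, ih, ih] <;> push_cast at hk ⊢ <;> omega

lemma P_pow_apply_top (m : ℕ) : (P ^ m : LaurentPolynomial ℤ).coeff (2 * m) = (-1) ^ m := by
  induction m with
  | zero => simp [one_apply]
  | succ n ih =>
    rw [pow_succ, mulP_apply,
      P_pow_apply_hi n _ (by push_cast; omega),
      show (2 * (((n:ℕ)+1:ℕ):ℤ) - 2 : ℤ) = 2 * n by push_cast; ring, ih]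
    ring

lemma P_pow_apply_bot (m : ℕ) : (P ^ m : LaurentPolynomial ℤ).coeff (-(2 * m)) = (-1) ^ m := by
  induction m with
  | zero => simp [one_apply]
  | succ n ih =>
    have h1 : (P ^ n : LaurentPolynomial ℤ).coeff ((-(2 * (((n:ℕ)+1:ℕ):ℤ))) - 2) = 0 :=
      P_pow_apply_lo n _ (by push_cast; omega)
    rw [pow_succ, mulP_apply, h1,
      show (-(2 * (((n:ℕ)+1:ℕ):ℤ)) + 2 : ℤ) = -(2 * n) by push_cast; ring, ih]
    ring

lemma maxDeg_eq {p : LaurentPolynomial ℤ} {M : ℤ} (h0 : p.coeff M ≠ 0)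
    (h : ∀ k, M < k → p.coeff k = 0) : maxDeg p = M := by
  have : p.coeff.support.max = (M : WithBot ℤ) := by
    apply le_antisymm
    · apply Finset.max_le
      intro b hb
      have hb' : p.coeff b ≠ 0 := Finsupp.mem_support_iff.mp hb
      exact_mod_cast le_of_not_gt fun hlt => hb' (h b hlt)
    · exact Finset.le_max (Finsupp.mem_support_iff.mpr h0)
  rw [maxDeg, this]; rfl

lemma minDeg_eq {p : LaurentPolynomial ℤ} {M : ℤ} (h0 : p.coeff M ≠ 0)
    (h : ∀ k, k < M → p.coeff k = 0) : minDeg p = M := by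
  have : p.coeff.support.min = (M : WithTop ℤ) := by
    apply le_antisymm
    · exact Finset.min_le (Finsupp.mem_support_iff.mpr h0)
    · apply Finset.le_min
      intro b hb
      have hb' : p.coeff b ≠ 0 := Finsupp.mem_support_iff.mp hb
      exact_mod_cast le_of_not_gt fun hlt => hb' (h b hlt)
  rw [minDeg, this]; rfl
variable {V : Type}

lemma circuits_flip_le [Fintype V] (D : Diagram V) (s s' : DState V) (i : V)
    (hoth : ∀ j, j ≠ i → s j = s' j) :
    circuits D s ≤ circuits D s' + 1 := by
  classical
  by_cases hss : s = s'
  · subst hss; omega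
  have hne : s i ≠ s' i := fun h =>
    hss (funext fun j => if hj : j = i then hj ▸ h else hoth j hj)
  set a : V × Fin 4 := (i, 0) with ha
  set c : V × Fin 4 := (i, 2) with hc
  set E := Relation.EqvGen (circuitRel D s) with hE
  have he : Equivalence E := Relation.EqvGen.is_equivalence _
  set r : V × Fin 4 → V × Fin 4 → Prop :=
    fun x y => E x y ∨ (E x a ∧ E c y) ∨ (E x c ∧ E a y) with hr
  have hrequiv : Equivalence r := by
    constructor
    · intro x; exact Or.inl (he.refl x)
    · rintro x y (h | ⟨h1, h2⟩ | ⟨h1, h2⟩)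
      · exact Or.inl (he.symm h)
      · exact Or.inr (Or.inr ⟨he.symm h2, he.symm h1⟩)
      · exact Or.inr (Or.inl ⟨he.symm h2, he.symm h1⟩)
    · rintro x y z (h | ⟨h1, h2⟩ | ⟨h1, h2⟩) (g | ⟨g1, g2⟩ | ⟨g1, g2⟩)
      · exact Or.inl (he.trans h g)
      · exact Or.inr (Or.inl ⟨he.trans h g1, g2⟩)
      · exact Or.inr (Or.inr ⟨he.trans h g1, g2⟩)
      · exact Or.inr (Or.inl ⟨h1, he.trans h2 g⟩)
      · exact Or.inl (he.trans h1 (he.trans (he.symm (he.trans h2 g1)) g2))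
      · exact Or.inl (he.trans h1 g2)
      · exact Or.inr (Or.inr ⟨h1, he.trans h2 g⟩)
      · exact Or.inl (he.trans h1 g2)
      · exact Or.inl (he.trans h1 (he.trans (he.symm (he.trans h2 g1)) g2))
  have hres : ∀ x, E x (resolveEnd s x) := fun x => Relation.EqvGen.rel _ _ (Or.inr rfl)
  have hinc : ∀ x y, circuitRel D s' x y → r x y := by
    rintro x y (h | h)
    · exact Or.inl (Relation.EqvGen.rel _ _ (Or.inl h))
    · subst h
      by_cases hx : x.1 = i
      · obtain ⟨v, t⟩ := x
        simp only at hx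
        subst hx
        cases hsv : s v with
        | true =>
          have hsv' : s' v = false := by
            cases h' : s' v
            · rfl
            · exact absurd (hsv.trans h'.symm) hne
          have e01 : E (v, 0) (v, 1) := by
            have := hres (v, 0); simpa [resolveEnd, hsv] using this
          have e23 : E (v, 2) (v, 3) := by
            have := hres (v, 2); simpa [resolveEnd, hsv] using this
          fin_cases t
          · show r (v, 0) (resolveEnd s' (v, 0))
            have hval : resolveEnd s' (v, 0) = (v, 3) := by simp [resolveEnd, hsv']
            rw [hval]
            exact Or.inr (Or.inl ⟨he.refl _, e23⟩)
          · show r (v, 1) (resolveEnd s' (v, 1))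
            have hval : resolveEnd s' (v, 1) = (v, 2) := by simp [resolveEnd, hsv']
            rw [hval]
            exact Or.inr (Or.inl ⟨he.symm e01, he.refl _⟩)
          · show r (v, 2) (resolveEnd s' (v, 2))
            have hval : resolveEnd s' (v, 2) = (v, 1) := by simp [resolveEnd, hsv']
            rw [hval]
            exact Or.inr (Or.inr ⟨he.refl _, e01⟩)
          · show r (v, 3) (resolveEnd s' (v, 3))
            have hval : resolveEnd s' (v, 3) = (v, 0) := by simp [resolveEnd, hsv']
            rw [hval]
            exact Or.inr (Or.inr ⟨he.symm e23, he.refl _⟩)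
        | false =>
          have hsv' : s' v = true := by
            cases h' : s' v
            · exact absurd (hsv.trans h'.symm) hne
            · rfl
          have e03 : E (v, 0) (v, 3) := by
            have := hres (v, 0); simpa [resolveEnd, hsv] using this
          have e12 : E (v, 1) (v, 2) := by
            have := hres (v, 1); simpa [resolveEnd, hsv] using this
          fin_cases t
          · show r (v, 0) (resolveEnd s' (v, 0))
            have hval : resolveEnd s' (v, 0) = (v, 1) := by simp [resolveEnd, hsv']
            rw [hval]
            exact Or.inr (Or.inl ⟨he.refl _, he.symm e12⟩)
          · show r (v, 1) (resolveEnd s' (v, 1))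
            have hval : resolveEnd s' (v, 1) = (v, 0) := by simp [resolveEnd, hsv']
            rw [hval]
            exact Or.inr (Or.inr ⟨e12, he.refl _⟩)
          · show r (v, 2) (resolveEnd s' (v, 2))
            have hval : resolveEnd s' (v, 2) = (v, 3) := by simp [resolveEnd, hsv']
            rw [hval]
            exact Or.inr (Or.inr ⟨he.refl _, e03⟩)
          · show r (v, 3) (resolveEnd s' (v, 3))
            have hval : resolveEnd s' (v, 3) = (v, 2) := by simp [resolveEnd, hsv']
            rw [hval]
            exact Or.inr (Or.inl ⟨he.symm e03, he.refl _⟩)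
      · have hsame : resolveEnd s' x = resolveEnd s x := by
          have : s x.1 = s' x.1 := hoth x.1 hx
          simp [resolveEnd, this]
        rw [hsame]
        exact Or.inl (hres x)
  let Sq : Setoid (V × Fin 4) := Relation.EqvGen.setoid (circuitRel D s)
  let S'q : Setoid (V × Fin 4) := Relation.EqvGen.setoid (circuitRel D s')
  let Rq : Setoid (V × Fin 4) := ⟨r, hrequiv⟩
  have hles : ∀ x y, Relation.EqvGen (circuitRel D s') x y → r x y := by
    intro x y h
    induction h with
    | rel u w h => exact hinc u w h
    | refl u => exact hrequiv.refl u
    | symm u w _ ih => exact hrequiv.symm ih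
    | trans u w z _ _ ih1 ih2 => exact hrequiv.trans ih1 ih2
  have h1 : Nat.card (Quotient Rq) ≤ Nat.card (Quotient S'q) := by
    apply Nat.card_le_card_of_surjective
      ((Quotient.lift (Quotient.mk Rq) (fun x y h => Quot.sound (hles x y h)) :
        Quotient S'q → Quotient Rq))
    intro q
    obtain ⟨x, rfl⟩ := Quotient.exists_rep q
    exact ⟨Quotient.mk S'q x, rfl⟩
  let g : Quotient Sq → Quotient Rq :=
    Quotient.lift (Quotient.mk Rq) (fun x y h => Quot.sound (Or.inl h))
  let φ : Quotient Sq → (Quotient Rq) ⊕ Unit :=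
    fun q => if q = Quotient.mk Sq a then Sum.inr () else Sum.inl (g q)
  have hφ : Function.Injective φ := by
    intro q1 q2 h
    by_cases e1 : q1 = Quotient.mk Sq a <;> by_cases e2 : q2 = Quotient.mk Sq a
    · exact e1.trans e2.symm
    · rw [show φ q1 = Sum.inr () from if_pos e1, show φ q2 = Sum.inl (g q2) from if_neg e2] at h
      exact absurd h (by simp)
    · rw [show φ q1 = Sum.inl (g q1) from if_neg e1, show φ q2 = Sum.inr () from if_pos e2] at h
      exact absurd h (by simp)
    · rw [show φ q1 = Sum.inl (g q1) from if_neg e1,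
        show φ q2 = Sum.inl (g q2) from if_neg e2] at h
      have hg : g q1 = g q2 := Sum.inl.inj h
      obtain ⟨x, rfl⟩ := Quotient.exists_rep q1
      obtain ⟨y, rfl⟩ := Quotient.exists_rep q2
      have hxy : r x y := Quotient.exact hg
      rcases hxy with hxy | ⟨hxa, _⟩ | ⟨_, hay⟩
      · exact Quot.sound hxy
      · exact absurd (Quot.sound hxa) e1
      · exact absurd (Quot.sound (he.symm hay)) e2
  have h2 : Nat.card (Quotient Sq) ≤ Nat.card ((Quotient Rq) ⊕ Unit) :=
    Nat.card_le_card_of_injective φ hφ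
  have h3 : Nat.card ((Quotient Rq) ⊕ Unit) = Nat.card (Quotient Rq) + 1 := by
    rw [Nat.card_sum]; simp
  have e1 : circuits D s = Nat.card (Quotient Sq) := rfl
  have e2 : circuits D s' = Nat.card (Quotient S'q) := rfl
  omega

lemma signSum_eq [Fintype V] (s : DState V) :
    signSum s = (Fintype.card V : ℤ)
      - 2 * ((Finset.univ.filter (fun i => s i = false)).card : ℤ) := by
  have h : ∀ c : V, (if s c then (1:ℤ) else -1)
      = 1 - 2 * (if s c = false then (1:ℤ) else 0) := by
    intro c; cases hc : s c <;> simp [hc]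
  rw [signSum, Finset.sum_congr rfl (fun c _ => h c), Finset.sum_sub_distrib,
    ← Finset.mul_sum, Finset.sum_boole, Finset.sum_const, Finset.card_univ]
  simp

lemma circuits_pos [Fintype V] (hV : Nonempty V) (D : Diagram V) (s : DState V) :
    1 ≤ circuits D s := by
  have : Nonempty (Quotient (Relation.EqvGen.setoid (circuitRel D s))) :=
    ⟨Quotient.mk _ (hV.some, 0)⟩
  exact Nat.card_pos

lemma filter_update_false [Fintype V] [DecidableEq V] (s : DState V) (i : V) :
    (Finset.univ.filter (fun j => Function.update s i true j = false))
      = (Finset.univ.filter (fun j => s j = false)).erase i := by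
  ext j
  by_cases hj : j = i <;> simp [Finset.mem_erase, Function.update_apply, hj]

lemma filter_update_true [Fintype V] [DecidableEq V] (s : DState V) (i : V) :
    (Finset.univ.filter (fun j => Function.update s i false j = true))
      = (Finset.univ.filter (fun j => s j = true)).erase i := by
  ext j
  by_cases hj : j = i <;> simp [Finset.mem_erase, Function.update_apply, hj]

lemma filter_update_false' [Fintype V] [DecidableEq V] (s : DState V) (i : V) :
    (Finset.univ.filter (fun j => Function.update s i false j = false))
      = insert i (Finset.univ.filter (fun j => s j = false)) := by
  ext j
  by_cases hj : j = i <;> simp [Function.update_apply, hj]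

lemma card_true_add_false [Fintype V] [DecidableEq V] (u : DState V) :
    (Finset.univ.filter (fun j => u j = true)).card
      + (Finset.univ.filter (fun j => u j = false)).card = Fintype.card V := by
  classical
  have e : (Finset.univ.filter (fun j => u j = false))
      = (Finset.univ.filter (fun j => ¬ u j = true)) := by
    apply Finset.filter_congr
    intro j _
    cases h : u j <;> simp [h]
  rw [e, ← Finset.card_univ]
  exact Finset.card_filter_add_card_filter_not (p := fun j => u j = true)

lemma all_true_of_card_false_zero [Fintype V] [DecidableEq V] (u : DState V)
    (hu : (Finset.univ.filter (fun j => u j = false)).card = 0) : u = sPlus V := by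
  funext j
  have hne : j ∉ Finset.univ.filter (fun j => u j = false) := by
    rw [Finset.card_eq_zero.mp hu]
    simp
  simp only [Finset.mem_filter, Finset.mem_univ, true_and] at hne
  cases h : u j
  · exact absurd h hne
  · rfl

lemma all_false_of_card_true_zero [Fintype V] [DecidableEq V] (u : DState V)
    (hu : (Finset.univ.filter (fun j => u j = true)).card = 0) : u = sMinus V := by
  funext j
  have hne : j ∉ Finset.univ.filter (fun j => u j = true) := by
    rw [Finset.card_eq_zero.mp hu]
    simp
  simp only [Finset.mem_filter, Finset.mem_univ, true_and] at hne
  cases h : u j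
  · rfl
  · exact absurd h hne

lemma two_le_card_filter [Fintype V] [DecidableEq V] {p : V → Prop} [DecidablePred p]
    {i j : V} (hij : j ≠ i) (hi : i ∈ Finset.univ.filter p) (hj : j ∈ Finset.univ.filter p) :
    2 ≤ (Finset.univ.filter p).card := by
  have hss : ({j, i} : Finset V) ⊆ Finset.univ.filter p := by
    intro x hx
    rcases Finset.mem_insert.mp hx with rfl | hx
    · exact hj
    · rwa [Finset.mem_singleton.mp hx]
  have := Finset.card_le_card hss
  rwa [Finset.card_insert_of_notMem (by simpa using hij), Finset.card_singleton] at this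

lemma signSum_sPlus [Fintype V] [DecidableEq V] :
    signSum (sPlus V) = (Fintype.card V : ℤ) := by
  rw [signSum_eq]
  simp [sPlus]

lemma signSum_sMinus [Fintype V] [DecidableEq V] :
    signSum (sMinus V) = -(Fintype.card V : ℤ) := by
  rw [signSum_eq]
  have : (Finset.univ.filter (fun i => sMinus V i = false)) = (Finset.univ : Finset V) := by
    apply Finset.filter_true_of_mem
    intro j _
    rfl
  rw [this, Finset.card_univ]
  ring

lemma top_bound [Fintype V] [DecidableEq V] (D : Diagram V) (hD : PlusAdequate D) :
    ∀ (k : ℕ) (s : DState V), (Finset.univ.filter (fun j => s j = false)).card = k →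
      s ≠ sPlus V →
      signSum s + 2 * (circuits D s : ℤ) + 4
        ≤ signSum (sPlus V) + 2 * (circuits D (sPlus V) : ℤ) := by
  classical
  intro k
  induction k using Nat.strong_induction_on with
  | _ k ih =>
    intro s hk hs
    have hk1 : 1 ≤ k := by
      rcases Nat.eq_zero_or_pos k with h | h
      · exact absurd (all_true_of_card_false_zero s (h ▸ hk)) hs
      · exact h
    obtain ⟨i, hi⟩ := Finset.card_pos.mp (show 0 < _ from hk ▸ hk1)
    have hi0 : s i = false := (Finset.mem_filter.mp hi).2
    set s' : DState V := Function.update s i true with hs'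
    have hoth : ∀ j, j ≠ i → s j = s' j := fun j hj =>
      (Function.update_of_ne hj true s).symm
    have hcard' : (Finset.univ.filter (fun j => s' j = false)).card = k - 1 := by
      rw [hs', filter_update_false, Finset.card_erase_of_mem hi, hk]
    have hsign : signSum s = signSum s' - 2 := by
      rw [signSum_eq, signSum_eq, hk, hcard']
      have : ((k - 1 : ℕ) : ℤ) = (k : ℤ) - 1 := by omega
      rw [this]
      ring
    have hc : (circuits D s : ℤ) ≤ (circuits D s' : ℤ) + 1 := by
      exact_mod_cast circuits_flip_le D s s' i hoth
    rcases Nat.lt_or_ge 1 k with h2 | h2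
    · have hs'ne : s' ≠ sPlus V := by
        intro h
        have h0 : (Finset.univ.filter (fun j => s' j = false)).card = 0 := by
          rw [h]
          simp [sPlus]
        omega
      have := ih (k - 1) (by omega) s' hcard' hs'ne
      omega
    · have hk1' : k = 1 := by omega
      have honeoff : OneOff (sPlus V) s := by
        refine ⟨i, by simp [sPlus, hi0], fun j hj => ?_⟩
        cases h : s j
        · exfalso
          have hjm : j ∈ Finset.univ.filter (fun j => s j = false) := by simp [h]
          have := two_le_card_filter hj hi hjm
          omega
        · simp [sPlus, h]
      have hlt : (circuits D s : ℤ) + 1 ≤ (circuits D (sPlus V) : ℤ) := by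
        exact_mod_cast hD s honeoff
      have hsigns : signSum s = (Fintype.card V : ℤ) - 2 := by
        rw [signSum_eq, hk, hk1']
        push_cast
        ring
      rw [hsigns, signSum_sPlus]
      omega

lemma bot_bound [Fintype V] [DecidableEq V] (D : Diagram V) (hD : MinusAdequate D) :
    ∀ (k : ℕ) (s : DState V), (Finset.univ.filter (fun j => s j = true)).card = k →
      s ≠ sMinus V →
      signSum (sMinus V) - 2 * (circuits D (sMinus V) : ℤ) + 4
        ≤ signSum s - 2 * (circuits D s : ℤ) := by
  classical
  intro k
  induction k using Nat.strong_induction_on with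
  | _ k ih =>
    intro s hk hs
    have hk1 : 1 ≤ k := by
      rcases Nat.eq_zero_or_pos k with h | h
      · exact absurd (all_false_of_card_true_zero s (h ▸ hk)) hs
      · exact h
    obtain ⟨i, hi⟩ := Finset.card_pos.mp (show 0 < _ from hk ▸ hk1)
    have hi0 : s i = true := (Finset.mem_filter.mp hi).2
    set s' : DState V := Function.update s i false with hs'
    have hoth : ∀ j, j ≠ i → s j = s' j := fun j hj =>
      (Function.update_of_ne hj false s).symm
    have hcard' : (Finset.univ.filter (fun j => s' j = true)).card = k - 1 := by
      rw [hs', filter_update_true, Finset.card_erase_of_mem hi, hk]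
    have hfrel : (Finset.univ.filter (fun j => s' j = false)).card
        = (Finset.univ.filter (fun j => s j = false)).card + 1 := by
      rw [hs', filter_update_false',
        Finset.card_insert_of_notMem (by simp [hi0])]
    have hsign : signSum s = signSum s' + 2 := by
      rw [signSum_eq, signSum_eq, hfrel]
      push_cast
      ring
    have hc : (circuits D s : ℤ) ≤ (circuits D s' : ℤ) + 1 := by
      exact_mod_cast circuits_flip_le D s s' i hoth
    rcases Nat.lt_or_ge 1 k with h2 | h2
    · have hs'ne : s' ≠ sMinus V := by
        intro h
        have h0 : (Finset.univ.filter (fun j => s' j = true)).card = 0 := by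
          rw [h]
          simp [sMinus]
        omega
      have := ih (k - 1) (by omega) s' hcard' hs'ne
      omega
    · have hk1' : k = 1 := by omega
      have honeoff : OneOff (sMinus V) s := by
        refine ⟨i, by simp [sMinus, hi0], fun j hj => ?_⟩
        cases h : s j
        · simp [sMinus, h]
        · exfalso
          have hjm : j ∈ Finset.univ.filter (fun j => s j = true) := by simp [h]
          have := two_le_card_filter hj hi hjm
          omega
      have hlt : (circuits D s : ℤ) + 1 ≤ (circuits D (sMinus V) : ℤ) := by
        exact_mod_cast hD s honeoff
      have hsigns : signSum s = -(Fintype.card V : ℤ) + 2 := by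
        have hfc : (Finset.univ.filter (fun j => s j = false)).card
            = Fintype.card V - 1 := by
          have := card_true_add_false s
          omega
        have hcV : 1 ≤ Fintype.card V := by
          have := card_true_add_false s
          omega
        rw [signSum_eq, hfc]
        have : ((Fintype.card V - 1 : ℕ) : ℤ) = (Fintype.card V : ℤ) - 1 := by omega
        rw [this]
        ring
      rw [hsigns, signSum_sMinus]
      omega

/-- If `D` is an adequate link diagram with `n` crossings, then
`B(⟨D⟩) = 2n + 2|s₊D| + 2|s₋D| - 4`. -/
theorem breadth_kauffman_adequate {V : Type} [Fintype V] [DecidableEq V]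
    (D : Diagram V) (hn : 1 ≤ Fintype.card V) (hD : Adequate D) :
    breadth (kauffman D) =
      2 * (Fintype.card V : ℤ) + 2 * circuits D (sPlus V) + 2 * circuits D (sMinus V) - 4 := by
  classical
  have hV : Nonempty V := Fintype.card_pos_iff.mp (by omega)
  set n : ℤ := (Fintype.card V : ℤ) with hn'
  set cp : ℕ := circuits D (sPlus V) with hcp
  set cm : ℕ := circuits D (sMinus V) with hcm
  have hcp1 : 1 ≤ cp := circuits_pos hV D _
  have hcm1 : 1 ≤ cm := circuits_pos hV D _
  have hcs1 : ∀ s : DState V, 1 ≤ circuits D s := circuits_pos hV D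
  have hsignp : signSum (sPlus V) = n := signSum_sPlus
  have hsignm : signSum (sMinus V) = -n := signSum_sMinus
  have hker : kauffman D = ∑ s : DState V, T (signSum s) * P ^ (circuits D s - 1) := rfl
  have happ : ∀ k : ℤ, (kauffman D).coeff k
      = ∑ s : DState V, (P ^ (circuits D s - 1) : LaurentPolynomial ℤ).coeff (k - signSum s) := by
    intro k
    rw [hker, AddMonoidAlgebra.coeff_sum, Finsupp.finset_sum_apply]
    exact Finset.sum_congr rfl fun s _ => Tmul_apply _ _ _
  have hcast : ∀ s : DState V, ((circuits D s - 1 : ℕ) : ℤ) = (circuits D s : ℤ) - 1 := by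
    intro s
    have := hcs1 s
    omega
  have hub : ∀ s : DState V, signSum s + 2 * (circuits D s : ℤ) ≤ n + 2 * cp := by
    intro s
    by_cases h : s = sPlus V
    · subst h; rw [hsignp]
    · have := top_bound D hD.1 _ s rfl h
      rw [hsignp] at this
      omega
  have hlb : ∀ s : DState V, -n - 2 * cm ≤ signSum s - 2 * (circuits D s : ℤ) := by
    intro s
    by_cases h : s = sMinus V
    · subst h; rw [hsignm]
    · have := bot_bound D hD.2 _ s rfl h
      rw [hsignm] at this
      omega
  set M : ℤ := n + 2 * cp - 2 with hM
  set m : ℤ := -n - 2 * cm + 2 with hm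
  have hterm0 : ∀ (s : DState V) (k : ℤ), signSum s + 2 * (circuits D s : ℤ) - 2 < k →
      (P ^ (circuits D s - 1) : LaurentPolynomial ℤ).coeff (k - signSum s) = 0 := by
    intro s k hk
    apply P_pow_apply_hi
    rw [hcast s]
    omega
  have hterm0' : ∀ (s : DState V) (k : ℤ), k < signSum s - 2 * (circuits D s : ℤ) + 2 →
      (P ^ (circuits D s - 1) : LaurentPolynomial ℤ).coeff (k - signSum s) = 0 := by
    intro s k hk
    apply P_pow_apply_lo
    rw [hcast s]
    omega
  have hmax : maxDeg (kauffman D) = M := by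
    apply maxDeg_eq
    · rw [happ M, Finset.sum_eq_single (sPlus V)]
      · rw [hsignp, show M - n = 2 * ((cp - 1 : ℕ) : ℤ) by rw [hcast (sPlus V), ← hcp, hM]; ring,
          P_pow_apply_top]
        exact pow_ne_zero _ (by norm_num)
      · intro s _ hsne
        apply hterm0
        have h4 := top_bound D hD.1 _ s rfl hsne
        rw [hsignp] at h4
        omega
      · intro h
        exact absurd (Finset.mem_univ _) h
    · intro k hk
      rw [happ k]
      apply Finset.sum_eq_zero
      intro s _
      apply hterm0
      have := hub s
      omega
  have hmin : minDeg (kauffman D) = m := by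
    apply minDeg_eq
    · rw [happ m, Finset.sum_eq_single (sMinus V)]
      · rw [hsignm,
          show m - -n = -(2 * ((cm - 1 : ℕ) : ℤ)) by rw [hcast (sMinus V), ← hcm, hm]; ring,
          P_pow_apply_bot]
        exact pow_ne_zero _ (by norm_num)
      · intro s _ hsne
        apply hterm0'
        have h4 := bot_bound D hD.2 _ s rfl hsne
        rw [hsignm] at h4
        omega
      · intro h
        exact absurd (Finset.mem_univ _) h
    · intro k hk
      rw [happ k]
      apply Finset.sum_eq_zero
      intro s _
      apply hterm0'
      have := hlb s
      omega
  rw [breadth, hmax, hmin, hM, hm, hcp, hcm, hn']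
  ring

end KnotPaper
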